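/- Let ν be a Borel measure on R^d \ {0} with ∫ min(|y|²,1) ν(dy) < ∞, and let g: R^d → [0,∞) be a probability-type density with ∫(1+|η|²)g(η)dη < ∞ satisfying |z|²/(1+|z|²) = ∫_{R^d} (1 - cos(η·z)) g(η) dη for all z ∈ R^d. Then for every x ≠ 0, ν({y : |y| ≥ |x|/2}) ≤ 5 ∫_{R^d} Re q(x, η/|x|) g(η) dη, where Re q(x,ξ) := ∫ (1 - cos(y·ξ)) ν(dy). -/

import Mathlib

open MeasureTheory

set_option maxHeartbeats 1000000 in
theorem stmt_7 (d : ℕ) (ν : Measure (EuclideanSpace ℝ (Fin d)))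
    (hν0 : ν {0} = 0)
    (hν : ∫⁻ y, ENNReal.ofReal (min (‖y‖ ^ 2) 1) ∂ν < ⊤)
    (g : EuclideanSpace ℝ (Fin d) → ℝ) (hg0 : ∀ η, 0 ≤ g η)
    (hgint : Integrable (fun η : EuclideanSpace ℝ (Fin d) => (1 + ‖η‖ ^ 2) * g η))
    (hrep : ∀ z : EuclideanSpace ℝ (Fin d),
      ‖z‖ ^ 2 / (1 + ‖z‖ ^ 2) = ∫ η, (1 - Real.cos (inner ℝ η z : ℝ)) * g η) :
    ∀ x : EuclideanSpace ℝ (Fin d), x ≠ 0 →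
      ν {y | ‖x‖ / 2 ≤ ‖y‖} ≤ ENNReal.ofReal 5 *
        ∫⁻ η, (∫⁻ y, ENNReal.ofReal (1 - Real.cos (inner ℝ y (‖x‖⁻¹ • η) : ℝ)) ∂ν)
          * ENNReal.ofReal (g η) := by
  intro x hx
  have hxn : (0:ℝ) < ‖x‖ := norm_pos_iff.mpr hx
  set c : ℝ := ‖x‖⁻¹ with hc
  have hcpos : 0 < c := inv_pos.mpr hxn
  set S : Set (EuclideanSpace ℝ (Fin d)) := {y | ‖x‖ / 2 ≤ ‖y‖} with hSdef
  have hSm : MeasurableSet S := (isClosed_le continuous_const continuous_norm).measurableSet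
  -- ν S is finite
  have hνS : ν S < ⊤ := by
    have hm : (0:ℝ) < min ((‖x‖/2)^2) 1 := lt_min (by positivity) one_pos
    have h1 : ENNReal.ofReal (min ((‖x‖/2)^2) 1) * ν S
        ≤ ∫⁻ y, ENNReal.ofReal (min (‖y‖^2) 1) ∂ν := by
      calc ENNReal.ofReal (min ((‖x‖/2)^2) 1) * ν S
          = ∫⁻ _ in S, ENNReal.ofReal (min ((‖x‖/2)^2) 1) ∂ν := by
            rw [setLIntegral_const]
        _ ≤ ∫⁻ y in S, ENNReal.ofReal (min (‖y‖^2) 1) ∂ν := by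
            refine setLIntegral_mono' hSm fun y hy => ?_
            refine ENNReal.ofReal_le_ofReal (min_le_min ?_ le_rfl)
            have : ‖x‖/2 ≤ ‖y‖ := hy
            nlinarith [norm_nonneg y]
        _ ≤ ∫⁻ y, ENNReal.ofReal (min (‖y‖^2) 1) ∂ν := setLIntegral_le_lintegral _ _
    by_contra hcon
    rw [not_lt, top_le_iff] at hcon
    rw [hcon, ENNReal.mul_top (ENNReal.ofReal_pos.mpr hm).ne'] at h1
    exact absurd (top_le_iff.mp h1) hν.ne
  set μ := ν.restrict S with hμ
  haveI : IsFiniteMeasure μ := ⟨by rwa [Measure.restrict_apply_univ]⟩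
  -- g is a.e. measurable
  have hg_aesm : AEStronglyMeasurable g (volume : Measure (EuclideanSpace ℝ (Fin d))) := by
    have h1 := hgint.aestronglyMeasurable
    have h2 : Continuous fun η : EuclideanSpace ℝ (Fin d) => (1+‖η‖^2)⁻¹ :=
      (continuous_const.add (continuous_norm.pow 2)).inv₀ (fun η => (add_pos_of_pos_of_nonneg one_pos (sq_nonneg _)).ne')
    have h3 := h2.aestronglyMeasurable.mul h1
    exact h3.congr (Filter.Eventually.of_forall fun η => by
      have hne : (1 + ‖η‖^2) ≠ 0 := by positivity
      simp only [Pi.mul_apply]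
      field_simp)
  have hgm : AEMeasurable g (volume : Measure (EuclideanSpace ℝ (Fin d))) :=
    hg_aesm.aemeasurable
  -- key identity for fixed y
  have key : ∀ y : EuclideanSpace ℝ (Fin d),
      (∫⁻ η, ENNReal.ofReal (1 - Real.cos (inner ℝ y (c • η) : ℝ)) * ENNReal.ofReal (g η))
        = ENNReal.ofReal (‖c • y‖^2 / (1 + ‖c • y‖^2)) := by
    intro y
    have hinner : ∀ η : EuclideanSpace ℝ (Fin d),
        (inner ℝ y (c • η) : ℝ) = (inner ℝ η (c • y) : ℝ) := by
      intro η
      rw [real_inner_smul_right, real_inner_smul_right, real_inner_comm]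
    have hcos : ∀ t : ℝ, 0 ≤ 1 - Real.cos t := fun t => by
      nlinarith [Real.cos_le_one t]
    have hint : Integrable (fun η : EuclideanSpace ℝ (Fin d) =>
        (1 - Real.cos (inner ℝ η (c • y) : ℝ)) * g η) := by
      refine Integrable.mono' (hgint.const_mul 2) ?_ ?_
      · have hcont : Continuous fun η : EuclideanSpace ℝ (Fin d) =>
            (1 - Real.cos (inner ℝ η (c • y) : ℝ)) :=
          continuous_const.sub (Real.continuous_cos.comp
            (continuous_id.inner continuous_const))
        exact hcont.aestronglyMeasurable.mul hg_aesm
      · refine Filter.Eventually.of_forall fun η => ?_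
        have h1 := hcos (inner ℝ η (c • y) : ℝ)
        have h2 : Real.cos (inner ℝ η (c • y) : ℝ) ≥ -1 := Real.neg_one_le_cos _
        have h3 := hg0 η
        have h4 : (0:ℝ) ≤ ‖η‖^2 := by positivity
        rw [Real.norm_eq_abs, abs_of_nonneg (mul_nonneg h1 h3)]
        nlinarith
    have h1 : ∀ η : EuclideanSpace ℝ (Fin d),
        ENNReal.ofReal (1 - Real.cos (inner ℝ y (c • η) : ℝ)) * ENNReal.ofReal (g η)
          = ENNReal.ofReal ((1 - Real.cos (inner ℝ η (c • y) : ℝ)) * g η) := by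
      intro η
      rw [hinner η, ENNReal.ofReal_mul (hcos _)]
    simp_rw [h1]
    rw [← ofReal_integral_eq_lintegral_ofReal hint
      (Filter.Eventually.of_forall fun η => mul_nonneg (hcos _) (hg0 η)), ← hrep (c • y)]
  -- lower bound on S
  have hfifth : ∀ y ∈ S, ENNReal.ofReal (1/5 : ℝ)
      ≤ ENNReal.ofReal (‖c • y‖^2 / (1 + ‖c • y‖^2)) := by
    intro y hy
    refine ENNReal.ofReal_le_ofReal ?_
    have ht : (1/2 : ℝ) ≤ ‖c • y‖ := by
      rw [norm_smul, Real.norm_eq_abs, abs_of_pos hcpos]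
      have hy' : ‖x‖/2 ≤ ‖y‖ := hy
      rw [hc, ← div_eq_inv_mul, le_div_iff₀ hxn]
      linarith
    have hpos : (0:ℝ) < 1 + ‖c • y‖^2 := by positivity
    rw [div_le_div_iff₀ (by norm_num) hpos]
    nlinarith
  -- measurability for Tonelli
  have hF : AEMeasurable (fun p : (EuclideanSpace ℝ (Fin d)) × (EuclideanSpace ℝ (Fin d)) =>
      ENNReal.ofReal (1 - Real.cos (inner ℝ p.1 (c • p.2) : ℝ)) * ENNReal.ofReal (g p.2))
      (μ.prod (volume : Measure (EuclideanSpace ℝ (Fin d)))) := by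
    have hcont : Continuous fun p : (EuclideanSpace ℝ (Fin d)) × (EuclideanSpace ℝ (Fin d)) =>
        (1 - Real.cos (inner ℝ p.1 (c • p.2) : ℝ)) :=
      continuous_const.sub (Real.continuous_cos.comp
        (continuous_fst.inner (continuous_snd.const_smul c)))
    exact (ENNReal.measurable_ofReal.comp hcont.measurable).aemeasurable.mul
      (hgm.ennreal_ofReal.comp_snd)
  calc ν S = ENNReal.ofReal 5 * (ENNReal.ofReal (1/5 : ℝ) * ν S) := by
        rw [← mul_assoc, ← ENNReal.ofReal_mul (by norm_num)]
        norm_num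
    _ ≤ ENNReal.ofReal 5 * ∫⁻ y in S, ENNReal.ofReal (‖c • y‖^2 / (1 + ‖c • y‖^2)) ∂ν := by
        refine mul_le_mul_right ?_ _
        rw [← setLIntegral_const S (ENNReal.ofReal (1/5 : ℝ))]
        exact setLIntegral_mono' hSm hfifth
    _ = ENNReal.ofReal 5 * ∫⁻ y, (∫⁻ η, ENNReal.ofReal (1 - Real.cos (inner ℝ y (c • η) : ℝ))
          * ENNReal.ofReal (g η)) ∂μ := by
        rw [hμ]
        congr 1
        exact lintegral_congr fun y => (key y).symm
    _ = ENNReal.ofReal 5 * ∫⁻ η, ∫⁻ y, ENNReal.ofReal (1 - Real.cos (inner ℝ y (c • η) : ℝ))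
          * ENNReal.ofReal (g η) ∂μ := by
        rw [lintegral_lintegral_swap hF]
    _ = ENNReal.ofReal 5 * ∫⁻ η, (∫⁻ y, ENNReal.ofReal (1 - Real.cos (inner ℝ y (c • η) : ℝ)) ∂μ)
          * ENNReal.ofReal (g η) := by
        congr 1
        exact lintegral_congr fun η => lintegral_mul_const' _ _ ENNReal.ofReal_ne_top
    _ ≤ ENNReal.ofReal 5 * ∫⁻ η, (∫⁻ y, ENNReal.ofReal (1 - Real.cos (inner ℝ y (c • η) : ℝ)) ∂ν)
          * ENNReal.ofReal (g η) := by
        refine mul_le_mul_right (lintegral_mono fun η => mul_le_mul_left ?_ _) _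
        exact lintegral_mono' Measure.restrict_le_self le_rfl
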